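/- Let L be a 2×2 operator matrix function on Ω in H = H₁ ⊕ H₂. Define W²_{Ψ,1}(L) := ⋂_{ε>0} {λ ∈ Ω : ∃ f ∈ D₁(λ), g ∈ D₂(λ), ‖f‖ = ‖g‖ = 1, |det L(λ)_{(f,g)}| < ε}; W²(L(λ)) := {z ∈ ℂ : ∃ f ∈ D₁(λ), g ∈ D₂(λ), ‖f‖ = ‖g‖ = 1, det(L(λ)_{(f,g)} − z·I₂) = 0} and W²_{Ψ,0}(L) := {λ ∈ Ω : 0 ∈ closure W²(L(λ))}. Then W²(L) ⊆ W²_{Ψ,1}(L) ⊆ W²_{Ψ,0}(L) ⊆ W²_{Ψ,2}(L) ⊆ W²_Ψ(L). -/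

import Mathlib

open Filter Topology

noncomputable section

variable {H₁ H₂ : Type*}
  [NormedAddCommGroup H₁] [InnerProductSpace ℂ H₁] [CompleteSpace H₁]
  [NormedAddCommGroup H₂] [InnerProductSpace ℂ H₂] [CompleteSpace H₂]

local notation "⟪" x ", " y "⟫" => @inner ℂ _ _ x y

/-- First diagonal block component `𝓑₁₁ f = P₁ 𝓑 (f, 0)` of a bounded operator on
the Hilbert space direct sum `H₁ ⊕ H₂`. -/
def blk11 (𝓑 : WithLp 2 (H₁ × H₂) →L[ℂ] WithLp 2 (H₁ × H₂)) (f : H₁) : H₁ :=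
  ((WithLp.equiv 2 (H₁ × H₂)) (𝓑 ((WithLp.equiv 2 (H₁ × H₂)).symm (f, 0)))).1

/-- Block component `𝓑₂₁ f = P₂ 𝓑 (f, 0)`. -/
def blk21 (𝓑 : WithLp 2 (H₁ × H₂) →L[ℂ] WithLp 2 (H₁ × H₂)) (f : H₁) : H₂ :=
  ((WithLp.equiv 2 (H₁ × H₂)) (𝓑 ((WithLp.equiv 2 (H₁ × H₂)).symm (f, 0)))).2

/-- Block component `𝓑₁₂ g = P₁ 𝓑 (0, g)`. -/
def blk12 (𝓑 : WithLp 2 (H₁ × H₂) →L[ℂ] WithLp 2 (H₁ × H₂)) (g : H₂) : H₁ :=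
  ((WithLp.equiv 2 (H₁ × H₂)) (𝓑 ((WithLp.equiv 2 (H₁ × H₂)).symm (0, g)))).1

/-- Block component `𝓑₂₂ g = P₂ 𝓑 (0, g)`. -/
def blk22 (𝓑 : WithLp 2 (H₁ × H₂) →L[ℂ] WithLp 2 (H₁ × H₂)) (g : H₂) : H₂ :=
  ((WithLp.equiv 2 (H₁ × H₂)) (𝓑 ((WithLp.equiv 2 (H₁ × H₂)).symm (0, g)))).2

/-- The quadratic numerical range `W²(L)` of the 2×2 operator matrix function with
entries `A(λ), B(λ), C(λ), D(λ)` on `Ω`. -/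
def qnr (Ω : Set ℂ) (A : ℂ → H₁ →ₗ.[ℂ] H₁) (B : ℂ → H₂ →ₗ.[ℂ] H₁)
    (C : ℂ → H₁ →ₗ.[ℂ] H₂) (D : ℂ → H₂ →ₗ.[ℂ] H₂) : Set ℂ :=
  {l | l ∈ Ω ∧ ∃ (f : H₁) (g : H₂) (hfA : f ∈ (A l).domain) (hfC : f ∈ (C l).domain)
    (hgB : g ∈ (B l).domain) (hgD : g ∈ (D l).domain), ‖f‖ = 1 ∧ ‖g‖ = 1 ∧
    ⟪f, (A l) ⟨f, hfA⟩⟫ * ⟪g, (D l) ⟨g, hgD⟩⟫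
      - ⟪f, (B l) ⟨g, hgB⟩⟫ * ⟪g, (C l) ⟨f, hfC⟩⟫ = 0}

/-- `W²(L + 𝓑)` for a bounded perturbation `𝓑` of the whole matrix. -/
def qnrPert (Ω : Set ℂ) (A : ℂ → H₁ →ₗ.[ℂ] H₁) (B : ℂ → H₂ →ₗ.[ℂ] H₁)
    (C : ℂ → H₁ →ₗ.[ℂ] H₂) (D : ℂ → H₂ →ₗ.[ℂ] H₂)
    (𝓑 : WithLp 2 (H₁ × H₂) →L[ℂ] WithLp 2 (H₁ × H₂)) : Set ℂ :=
  {l | l ∈ Ω ∧ ∃ (f : H₁) (g : H₂) (hfA : f ∈ (A l).domain) (hfC : f ∈ (C l).domain)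
    (hgB : g ∈ (B l).domain) (hgD : g ∈ (D l).domain), ‖f‖ = 1 ∧ ‖g‖ = 1 ∧
    ⟪f, (A l) ⟨f, hfA⟩ + blk11 𝓑 f⟫ * ⟪g, (D l) ⟨g, hgD⟩ + blk22 𝓑 g⟫
      - ⟪f, (B l) ⟨g, hgB⟩ + blk12 𝓑 g⟫ * ⟪g, (C l) ⟨f, hfC⟩ + blk21 𝓑 f⟫ = 0}

/-- `W²_ε(L) = ⋃_{‖𝓑‖<ε} W²(L + 𝓑)`. -/
def qnrEps (Ω : Set ℂ) (A : ℂ → H₁ →ₗ.[ℂ] H₁) (B : ℂ → H₂ →ₗ.[ℂ] H₁)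
    (C : ℂ → H₁ →ₗ.[ℂ] H₂) (D : ℂ → H₂ →ₗ.[ℂ] H₂) (ε : ℝ) : Set ℂ :=
  ⋃ (𝓑 : WithLp 2 (H₁ × H₂) →L[ℂ] WithLp 2 (H₁ × H₂)) (_ : ‖𝓑‖ < ε),
    qnrPert Ω A B C D 𝓑

/-- The pseudo quadratic numerical range `W²_Ψ(L) = ⋂_{ε>0} W²_ε(L)`. -/
def qnrPsi (Ω : Set ℂ) (A : ℂ → H₁ →ₗ.[ℂ] H₁) (B : ℂ → H₂ →ₗ.[ℂ] H₁)
    (C : ℂ → H₁ →ₗ.[ℂ] H₂) (D : ℂ → H₂ →ₗ.[ℂ] H₂) : Set ℂ :=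
  ⋂ ε > (0 : ℝ), qnrEps Ω A B C D ε

/-- `W²(L + diag(B₁, B₂))` for bounded diagonal perturbations. -/
def qnrDiag (Ω : Set ℂ) (A : ℂ → H₁ →ₗ.[ℂ] H₁) (B : ℂ → H₂ →ₗ.[ℂ] H₁)
    (C : ℂ → H₁ →ₗ.[ℂ] H₂) (D : ℂ → H₂ →ₗ.[ℂ] H₂)
    (B₁ : H₁ →L[ℂ] H₁) (B₂ : H₂ →L[ℂ] H₂) : Set ℂ :=
  {l | l ∈ Ω ∧ ∃ (f : H₁) (g : H₂) (hfA : f ∈ (A l).domain) (hfC : f ∈ (C l).domain)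
    (hgB : g ∈ (B l).domain) (hgD : g ∈ (D l).domain), ‖f‖ = 1 ∧ ‖g‖ = 1 ∧
    ⟪f, (A l) ⟨f, hfA⟩ + B₁ f⟫ * ⟪g, (D l) ⟨g, hgD⟩ + B₂ g⟫
      - ⟪f, (B l) ⟨g, hgB⟩⟫ * ⟪g, (C l) ⟨f, hfC⟩⟫ = 0}

/-- `W²_{Ψ,2}(L) = ⋂_{ε>0} ⋃_{‖B₁‖<ε, ‖B₂‖<ε} W²(L + diag(B₁, B₂))`. -/
def qnrPsi2 (Ω : Set ℂ) (A : ℂ → H₁ →ₗ.[ℂ] H₁) (B : ℂ → H₂ →ₗ.[ℂ] H₁)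
    (C : ℂ → H₁ →ₗ.[ℂ] H₂) (D : ℂ → H₂ →ₗ.[ℂ] H₂) : Set ℂ :=
  ⋂ ε > (0 : ℝ), ⋃ (B₁ : H₁ →L[ℂ] H₁) (B₂ : H₂ →L[ℂ] H₂)
    (_ : ‖B₁‖ < ε ∧ ‖B₂‖ < ε), qnrDiag Ω A B C D B₁ B₂

/-- The quadratic numerical range `W²(L(λ))` of the single operator matrix `L(λ)`:
the set of `z` such that `det(L(λ)_{(f,g)} − z·I₂) = 0` for some unit `f, g`. -/
def qnrAt (Ω : Set ℂ) (A : ℂ → H₁ →ₗ.[ℂ] H₁) (B : ℂ → H₂ →ₗ.[ℂ] H₁)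
    (C : ℂ → H₁ →ₗ.[ℂ] H₂) (D : ℂ → H₂ →ₗ.[ℂ] H₂) (l : ℂ) : Set ℂ :=
  {z | ∃ (f : H₁) (g : H₂) (hfA : f ∈ (A l).domain) (hfC : f ∈ (C l).domain)
    (hgB : g ∈ (B l).domain) (hgD : g ∈ (D l).domain), ‖f‖ = 1 ∧ ‖g‖ = 1 ∧
    (⟪f, (A l) ⟨f, hfA⟩⟫ - z) * (⟪g, (D l) ⟨g, hgD⟩⟫ - z)
      - ⟪f, (B l) ⟨g, hgB⟩⟫ * ⟪g, (C l) ⟨f, hfC⟩⟫ = 0}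

/-- `W²_{Ψ,1}(L) = ⋂_{ε>0} {λ ∈ Ω : |det L(λ)_{(f,g)}| < ε for some unit f, g}`. -/
def qnrPsi1 (Ω : Set ℂ) (A : ℂ → H₁ →ₗ.[ℂ] H₁) (B : ℂ → H₂ →ₗ.[ℂ] H₁)
    (C : ℂ → H₁ →ₗ.[ℂ] H₂) (D : ℂ → H₂ →ₗ.[ℂ] H₂) : Set ℂ :=
  ⋂ ε > (0 : ℝ), {l | l ∈ Ω ∧ ∃ (f : H₁) (g : H₂) (hfA : f ∈ (A l).domain)
    (hfC : f ∈ (C l).domain) (hgB : g ∈ (B l).domain) (hgD : g ∈ (D l).domain),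
    ‖f‖ = 1 ∧ ‖g‖ = 1 ∧
    ‖(⟪f, (A l) ⟨f, hfA⟩⟫ * ⟪g, (D l) ⟨g, hgD⟩⟫
      - ⟪f, (B l) ⟨g, hgB⟩⟫ * ⟪g, (C l) ⟨f, hfC⟩⟫)‖ < ε}

/-- `W²_{Ψ,0}(L) = {λ ∈ Ω : 0 ∈ closure W²(L(λ))}`. -/
def qnrPsi0 (Ω : Set ℂ) (A : ℂ → H₁ →ₗ.[ℂ] H₁) (B : ℂ → H₂ →ₗ.[ℂ] H₁)
    (C : ℂ → H₁ →ₗ.[ℂ] H₂) (D : ℂ → H₂ →ₗ.[ℂ] H₂) : Set ℂ :=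
  {l | l ∈ Ω ∧ (0 : ℂ) ∈ closure (qnrAt Ω A B C D l)}

/-- A quadratic `(a-z)(d-z) - bc` has a root of modulus at most `√|ad - bc|`. -/
lemma exists_small_root (a b c d : ℂ) :
    ∃ z : ℂ, (a - z) * (d - z) - b * c = 0 ∧
      ‖z‖ ^ 2 ≤ ‖a * d - b * c‖ := by
  obtain ⟨δ, hδ⟩ := IsAlgClosed.exists_pow_nat_eq ((a + d) ^ 2 - 4 * (a * d - b * c))
    (n := 2) (by norm_num)
  set z₁ : ℂ := (a + d + δ) / 2 with hz₁
  set z₂ : ℂ := (a + d - δ) / 2 with hz₂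
  have hroot₁ : (a - z₁) * (d - z₁) - b * c = 0 := by
    rw [hz₁]; linear_combination (1 / 4 : ℂ) * hδ
  have hroot₂ : (a - z₂) * (d - z₂) - b * c = 0 := by
    rw [hz₂]; linear_combination (1 / 4 : ℂ) * hδ
  have hprod : z₁ * z₂ = a * d - b * c := by
    rw [hz₁, hz₂]; linear_combination (-(1 : ℂ) / 4) * hδ
  rcases le_total ‖z₁‖ ‖z₂‖ with h | h
  · refine ⟨z₁, hroot₁, ?_⟩
    calc ‖z₁‖ ^ 2 ≤ ‖z₁‖ * ‖z₂‖ := by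
          rw [sq]; exact mul_le_mul_of_nonneg_left h (norm_nonneg _)
      _ = ‖a * d - b * c‖ := by rw [← norm_mul, hprod]
  · refine ⟨z₂, hroot₂, ?_⟩
    calc ‖z₂‖ ^ 2 ≤ ‖z₁‖ * ‖z₂‖ := by
          rw [sq]; exact mul_le_mul_of_nonneg_right h (norm_nonneg _)
      _ = ‖a * d - b * c‖ := by rw [← norm_mul, hprod]

/-- `W²(L) ⊆ W²_{Ψ,1}(L) ⊆ W²_{Ψ,0}(L) ⊆ W²_{Ψ,2}(L) ⊆ W²_Ψ(L)`. -/
theorem qnr_pseudo_chain (Ω : Set ℂ) (A : ℂ → H₁ →ₗ.[ℂ] H₁) (B : ℂ → H₂ →ₗ.[ℂ] H₁)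
    (C : ℂ → H₁ →ₗ.[ℂ] H₂) (D : ℂ → H₂ →ₗ.[ℂ] H₂) :
    qnr Ω A B C D ⊆ qnrPsi1 Ω A B C D ∧
    qnrPsi1 Ω A B C D ⊆ qnrPsi0 Ω A B C D ∧
    qnrPsi0 Ω A B C D ⊆ qnrPsi2 Ω A B C D ∧
    qnrPsi2 Ω A B C D ⊆ qnrPsi Ω A B C D := by
  refine ⟨?_, ?_, ?_, ?_⟩
  · -- W² ⊆ W²_{Ψ,1}
    rintro l ⟨hΩ, f, g, hfA, hfC, hgB, hgD, hf, hg, hdet⟩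
    refine Set.mem_iInter₂.2 fun ε hε => ⟨hΩ, f, g, hfA, hfC, hgB, hgD, hf, hg, ?_⟩
    rw [hdet]; simpa using hε
  · -- W²_{Ψ,1} ⊆ W²_{Ψ,0}
    intro l hl
    have hl' := Set.mem_iInter₂.1 hl
    refine ⟨(hl' 1 one_pos).1, Metric.mem_closure_iff.2 fun ε hε => ?_⟩
    obtain ⟨-, f, g, hfA, hfC, hgB, hgD, hf, hg, hdet⟩ := hl' (ε ^ 2) (by positivity)
    obtain ⟨z, hz, hzabs⟩ := exists_small_root (⟪f, (A l) ⟨f, hfA⟩⟫) (⟪f, (B l) ⟨g, hgB⟩⟫)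
      (⟪g, (C l) ⟨f, hfC⟩⟫) (⟪g, (D l) ⟨g, hgD⟩⟫)
    refine ⟨z, ⟨f, g, hfA, hfC, hgB, hgD, hf, hg, hz⟩, ?_⟩
    have habs : ‖z‖ ^ 2 < ε ^ 2 := lt_of_le_of_lt hzabs hdet
    have : ‖z‖ < ε := by
      by_contra hcon
      exact absurd habs (not_lt.2 (pow_le_pow_left₀ hε.le (not_lt.1 hcon) 2))
    simpa [Complex.dist_eq] using this
  · -- W²_{Ψ,0} ⊆ W²_{Ψ,2}
    rintro l ⟨hΩ, hcl⟩
    refine Set.mem_iInter₂.2 fun ε hε => ?_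
    obtain ⟨z, hzmem, hzd⟩ := Metric.mem_closure_iff.1 hcl ε hε
    obtain ⟨f, g, hfA, hfC, hgB, hgD, hf, hg, hz⟩ := hzmem
    have hzabs : ‖z‖ < ε := by simpa [Complex.dist_eq] using hzd
    refine Set.mem_iUnion.2 ⟨-z • ContinuousLinearMap.id ℂ H₁,
      Set.mem_iUnion.2 ⟨-z • ContinuousLinearMap.id ℂ H₂, Set.mem_iUnion.2 ⟨⟨?_, ?_⟩,
      hΩ, f, g, hfA, hfC, hgB, hgD, hf, hg, ?_⟩⟩⟩
    · calc ‖-z • ContinuousLinearMap.id ℂ H₁‖ = ‖-z‖ * ‖ContinuousLinearMap.id ℂ H₁‖ :=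
          norm_smul _ _
        _ ≤ ‖z‖ * 1 := by
          rw [norm_neg]; exact mul_le_mul_of_nonneg_left ContinuousLinearMap.norm_id_le
            (norm_nonneg _)
        _ < ε := by simpa using hzabs
    · calc ‖-z • ContinuousLinearMap.id ℂ H₂‖ = ‖-z‖ * ‖ContinuousLinearMap.id ℂ H₂‖ :=
          norm_smul _ _
        _ ≤ ‖z‖ * 1 := by
          rw [norm_neg]; exact mul_le_mul_of_nonneg_left ContinuousLinearMap.norm_id_le
            (norm_nonneg _)
        _ < ε := by simpa using hzabs
    · have h₁ : ⟪f, (A l) ⟨f, hfA⟩ + (-z • ContinuousLinearMap.id ℂ H₁) f⟫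
          = ⟪f, (A l) ⟨f, hfA⟩⟫ - z := by
        simp only [ContinuousLinearMap.smul_apply, ContinuousLinearMap.id_apply,
          inner_add_right, inner_smul_right]
        rw [inner_self_eq_norm_sq_to_K, hf]
        push_cast; ring
      have h₂ : ⟪g, (D l) ⟨g, hgD⟩ + (-z • ContinuousLinearMap.id ℂ H₂) g⟫
          = ⟪g, (D l) ⟨g, hgD⟩⟫ - z := by
        simp only [ContinuousLinearMap.smul_apply, ContinuousLinearMap.id_apply,
          inner_add_right, inner_smul_right]
        rw [inner_self_eq_norm_sq_to_K, hg]
        push_cast; ring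
      rw [h₁, h₂]; exact hz
  · -- W²_{Ψ,2} ⊆ W²_Ψ
    intro l hl
    refine Set.mem_iInter₂.2 fun ε hε => ?_
    have hl' := Set.mem_iInter₂.1 hl ε hε
    obtain ⟨S₁, hS₁⟩ := Set.mem_iUnion.1 hl'
    obtain ⟨S₂, hS₂⟩ := Set.mem_iUnion.1 hS₁
    obtain ⟨⟨hB₁, hB₂⟩, hΩ, f, g, hfA, hfC, hgB, hgD, hf, hg, hdet⟩ := Set.mem_iUnion.1 hS₂
    set e := WithLp.prodContinuousLinearEquiv 2 ℂ H₁ H₂ with he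
    set 𝓑 : WithLp 2 (H₁ × H₂) →L[ℂ] WithLp 2 (H₁ × H₂) :=
      (e.symm.toContinuousLinearMap.comp (S₁.prodMap S₂)).comp e.toContinuousLinearMap with h𝓑
    set M := max ‖S₁‖ ‖S₂‖ with hM
    have hMnn : 0 ≤ M := le_trans (norm_nonneg _) (le_max_left _ _)
    have hbound : ∀ x : WithLp 2 (H₁ × H₂), ‖𝓑 x‖ ≤ M * ‖x‖ := by
      intro x
      have hfst : (𝓑 x).fst = S₁ x.fst := rfl
      have hsnd : (𝓑 x).snd = S₂ x.snd := rfl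
      have k₁ : ‖S₁ x.fst‖ ≤ M * ‖x.fst‖ :=
        le_trans (S₁.le_opNorm _)
          (mul_le_mul_of_nonneg_right (le_max_left _ _) (norm_nonneg _))
      have k₂ : ‖S₂ x.snd‖ ≤ M * ‖x.snd‖ :=
        le_trans (S₂.le_opNorm _)
          (mul_le_mul_of_nonneg_right (le_max_right _ _) (norm_nonneg _))
      have k₁' : ‖S₁ x.fst‖ ^ 2 ≤ M ^ 2 * ‖x.fst‖ ^ 2 := by
        rw [← mul_pow]; exact pow_le_pow_left₀ (norm_nonneg _) k₁ 2
      have k₂' : ‖S₂ x.snd‖ ^ 2 ≤ M ^ 2 * ‖x.snd‖ ^ 2 := by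
        rw [← mul_pow]; exact pow_le_pow_left₀ (norm_nonneg _) k₂ 2
      have hsq : ‖𝓑 x‖ ^ 2 ≤ (M * ‖x‖) ^ 2 := by
        rw [WithLp.prod_norm_sq_eq_of_L2, hfst, hsnd, mul_pow,
          WithLp.prod_norm_sq_eq_of_L2, mul_add]
        exact add_le_add k₁' k₂'
      have := Real.sqrt_le_sqrt hsq
      rwa [Real.sqrt_sq (norm_nonneg _), Real.sqrt_sq (by positivity)] at this
    have hnorm : ‖𝓑‖ < ε :=
      lt_of_le_of_lt (ContinuousLinearMap.opNorm_le_bound _ hMnn hbound) (max_lt hB₁ hB₂)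
    refine Set.mem_iUnion.2 ⟨𝓑, Set.mem_iUnion.2 ⟨hnorm,
      hΩ, f, g, hfA, hfC, hgB, hgD, hf, hg, ?_⟩⟩
    have e11 : blk11 𝓑 f = S₁ f := by simp [blk11, h𝓑, he, ContinuousLinearMap.coe_prodMap']
    have e21 : blk21 𝓑 f = 0 := by simp [blk21, h𝓑, he, ContinuousLinearMap.coe_prodMap']
    have e12 : blk12 𝓑 g = 0 := by simp [blk12, h𝓑, he, ContinuousLinearMap.coe_prodMap']
    have e22 : blk22 𝓑 g = S₂ g := by simp [blk22, h𝓑, he, ContinuousLinearMap.coe_prodMap']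
    rw [e11, e21, e12, e22]
    simpa using hdet

end
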